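/- If p ∈ C_{max,d}(n,n,m) is synchronous, then there exists a single family of PVMs (E x ·)_{x ∈ Fin n} with m outcomes on ℂ^d such that (p x y i j : ℂ) = (1/d)·Tr(E x i * E y j) for all x, y, i, j. -/

import Mathlib

open scoped BigOperators

/-- A correlation with `nA` questions for Alice, `nB` questions for Bob and `m` outcomes. -/
def IsCorrelation {nA nB m : ℕ} (p : Fin nA → Fin nB → Fin m → Fin m → ℝ) : Prop :=
  (∀ x y i j, 0 ≤ p x y i j) ∧ ∀ x y, (∑ i, ∑ j, p x y i j) = 1

/-- A projection-valued measure with `m` outcomes on `ℂ^d`. -/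
def IsPVM {d m : ℕ} (E : Fin m → Matrix (Fin d) (Fin d) ℂ) : Prop :=
  (∀ i, (E i).IsHermitian) ∧ (∀ i, E i * E i = E i) ∧ (∑ i, E i = 1)

/-- The set `C_{max,d}(nA,nB,m)` of maximally entangled correlations in dimension `d`. -/
def CmaxD (nA nB m d : ℕ) : Set (Fin nA → Fin nB → Fin m → Fin m → ℝ) :=
  {p | IsCorrelation p ∧
    ∃ (E : Fin nA → Fin m → Matrix (Fin d) (Fin d) ℂ)
      (F : Fin nB → Fin m → Matrix (Fin d) (Fin d) ℂ),
      (∀ x, IsPVM (E x)) ∧ (∀ y, IsPVM (F y)) ∧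
      ∀ x y i j, (p x y i j : ℂ) = (1 / (d : ℂ)) * (E x i * F y j).trace}

/-- The set `C_max(nA,nB,m)` of maximally entangled correlations. -/
def Cmax (nA nB m : ℕ) : Set (Fin nA → Fin nB → Fin m → Fin m → ℝ) :=
  ⋃ (d : ℕ) (_ : 1 ≤ d), CmaxD nA nB m d

/-- A correlation with the same questions for Alice and Bob is synchronous if
`p x x i j = 0` whenever `i ≠ j`. -/
def Synchronous {n m : ℕ} (p : Fin n → Fin n → Fin m → Fin m → ℝ) : Prop :=
  ∀ x i j, i ≠ j → p x x i j = 0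

/-- The set `C_max^s(n,m)` of synchronous maximally entangled correlations. -/
def CmaxSync (n m : ℕ) : Set (Fin n → Fin n → Fin m → Fin m → ℝ) :=
  {p ∈ Cmax n n m | Synchronous p}

open Matrix in
lemma trace_self_mul_conjTranspose_eq_zero {d : ℕ} {M : Matrix (Fin d) (Fin d) ℂ}
    (h : (M * Mᴴ).trace = 0) : M = 0 := by
  have htr : (M * Mᴴ).trace = ∑ i, ∑ j, (Complex.normSq (M i j) : ℂ) := by
    simp [Matrix.trace, Matrix.mul_apply, Matrix.conjTranspose_apply, Matrix.diag,
      Complex.mul_conj]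
  rw [htr] at h
  have h' : (∑ i, ∑ j, Complex.normSq (M i j)) = 0 := by
    exact_mod_cast h
  ext i j
  have hnn : ∀ i ∈ (Finset.univ : Finset (Fin d)), 0 ≤ ∑ j, Complex.normSq (M i j) :=
    fun i _ => Finset.sum_nonneg fun j _ => Complex.normSq_nonneg _
  have h1 := (Finset.sum_eq_zero_iff_of_nonneg hnn).mp h' i (Finset.mem_univ i)
  have h2 := (Finset.sum_eq_zero_iff_of_nonneg
    (fun j _ => Complex.normSq_nonneg (M i j))).mp h1 j (Finset.mem_univ j)
  simpa using Complex.normSq_eq_zero.mp h2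

open Matrix in
lemma proj_mul_eq_zero_of_trace {d : ℕ} {A B : Matrix (Fin d) (Fin d) ℂ}
    (hA : A.IsHermitian) (hB : B.IsHermitian) (hA2 : A * A = A) (hB2 : B * B = B)
    (h : (A * B).trace = 0) : A * B = 0 := by
  apply trace_self_mul_conjTranspose_eq_zero
  have hAB : (A * B)ᴴ = B * A := by
    rw [Matrix.conjTranspose_mul, hA.eq, hB.eq]
  rw [hAB]
  have : A * B * (B * A) = A * B * A := by
    rw [mul_assoc, ← mul_assoc B B A, hB2, ← mul_assoc]
  rw [this]
  calc (A * B * A).trace = (A * A * B).trace := Matrix.trace_mul_cycle _ _ _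
    _ = (A * B).trace := by rw [hA2]
    _ = 0 := h

/-- A synchronous correlation in `C_{max,d}(n,n,m)` is realized by a single
family of PVMs: `p x y i j = (1/d) Tr(E x i * E y j)`. -/
theorem synchronous_CmaxD_single_pvm_family {n m d : ℕ}
    (p : Fin n → Fin n → Fin m → Fin m → ℝ)
    (hp : p ∈ CmaxD n n m d) (hsync : Synchronous p) :
    ∃ E : Fin n → Fin m → Matrix (Fin d) (Fin d) ℂ,
      (∀ x, IsPVM (E x)) ∧
      ∀ x y i j, (p x y i j : ℂ) = (1 / (d : ℂ)) * (E x i * E y j).trace := by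
  obtain ⟨⟨hnn, hsum⟩, E, F, hE, hF, hrep⟩ := hp
  refine ⟨E, hE, ?_⟩
  have htr0 : ∀ x i j, i ≠ j → (E x i * F x j).trace = 0 := by
    intro x i j hij
    rcases Nat.eq_zero_or_pos d with hd | hd
    · subst hd
      simp [Matrix.trace]
    · have h := hrep x x i j
      rw [hsync x i j hij] at h
      have hd' : (d : ℂ) ≠ 0 := by exact_mod_cast hd.ne'
      field_simp at h
      simpa using h.symm
  have hEF0 : ∀ x i j, i ≠ j → E x i * F x j = 0 := fun x i j hij =>
    proj_mul_eq_zero_of_trace ((hE x).1 i) ((hF x).1 j) ((hE x).2.1 i) ((hF x).2.1 j)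
      (htr0 x i j hij)
  have hFE0 : ∀ x i j, i ≠ j → F x j * E x i = 0 := by
    intro x i j hij
    have := congrArg Matrix.conjTranspose (hEF0 x i j hij)
    rwa [Matrix.conjTranspose_mul, ((hE x).1 i).eq, ((hF x).1 j).eq,
      Matrix.conjTranspose_zero] at this
  have hFeqE : ∀ x i, F x i = E x i := by
    intro x i
    have h1 : E x i * F x i = E x i := by
      have : E x i * (∑ j, F x j) = E x i := by rw [(hF x).2.2, mul_one]
      rw [Finset.mul_sum] at this
      rwa [Finset.sum_eq_single i (fun j _ hj => hEF0 x i j (Ne.symm hj))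
        (fun h => absurd (Finset.mem_univ i) h)] at this
    have h2 : F x i * E x i = F x i := by
      have : F x i * (∑ j, E x j) = F x i := by rw [(hE x).2.2, mul_one]
      rw [Finset.mul_sum] at this
      rwa [Finset.sum_eq_single i (fun j _ hj => hFE0 x j i hj)
        (fun h => absurd (Finset.mem_univ i) h)] at this
    have h3 : F x i * E x i = E x i := by
      have := congrArg Matrix.conjTranspose h1
      rwa [Matrix.conjTranspose_mul, ((hE x).1 i).eq, ((hF x).1 i).eq] at this
    rw [← h2, h3]
  intro x y i j
  rw [hrep x y i j, hFeqE y j]
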